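/- Let (X,Fₙ,*) be a generalized fuzzy n-metric space. Then (X, τ_F) is a Hausdorff topological space, where τ_F is the topology generated by the open balls B_F(x,r,t) = {y ∈ X : Fₙ(x,y,y,…,y,t) > 1−r}. -/
import Mathlib


/-- A continuous t-norm on `[0,1] ⊆ ℝ`. -/
structure IsContTNorm (star : ℝ → ℝ → ℝ) : Prop where
  comm : ∀ a b, star a b = star b a
  assoc : ∀ a b c, star (star a b) c = star a (star b c)
  one : ∀ a, a ∈ Set.Icc (0:ℝ) 1 → star a 1 = a
  mono : ∀ a b c d, a ≤ c → b ≤ d → star a b ≤ star c d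
  maps : ∀ a b, a ∈ Set.Icc (0:ℝ) 1 → b ∈ Set.Icc (0:ℝ) 1 → star a b ∈ Set.Icc (0:ℝ) 1
  cont : Continuous fun p : ℝ × ℝ => star p.1 p.2

/-- A generalized fuzzy `n`-metric space structure (Khan), in the sense of
George and Veeramani: `star` is a continuous t-norm and `F` is a fuzzy set on
`Xⁿ × (0,∞)` satisfying axioms (M1)–(M6). -/
structure IsGenFuzzyNMetric {X : Type*} (n : ℕ) (hn : 3 ≤ n)
    (star : ℝ → ℝ → ℝ) (F : (Fin n → X) → ℝ → ℝ) : Prop where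
  /-- `F` takes values in `[0,1]` -/
  mem : ∀ (x : Fin n → X) (t : ℝ), 0 < t → F x t ∈ Set.Icc (0:ℝ) 1
  /-- (M1) `F(x₁,…,x₁,x₂,t) > 0` for `x₁ ≠ x₂` -/
  pos : ∀ (x y : X) (t : ℝ), 0 < t → x ≠ y →
    0 < F (fun i => if i.val = n - 1 then y else x) t
  /-- (M2) `F(x₁,…,x₁,x₂,t) ≥ F(x₁,…,xₙ,t)` when at least two of `x₂,…,xₙ` are distinct -/
  ge : ∀ (x : Fin n → X) (t : ℝ), 0 < t →
    (∃ i j : Fin n, i ≠ ⟨0, by omega⟩ ∧ j ≠ ⟨0, by omega⟩ ∧ x i ≠ x j) →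
    F x t ≤ F (fun i => if i.val = n - 1 then x ⟨1, by omega⟩ else x ⟨0, by omega⟩) t
  /-- (M3) `F(x₁,…,xₙ,t) = 1` iff all the points coincide -/
  eq_one_iff : ∀ (x : Fin n → X) (t : ℝ), 0 < t → (F x t = 1 ↔ ∀ i j, x i = x j)
  /-- (M4) permutation invariance -/
  perm : ∀ (x : Fin n → X) (σ : Equiv.Perm (Fin n)) (t : ℝ), 0 < t → F (x ∘ σ) t = F x t
  /-- (M5) `F(x₁,a,…,a,t) * F(a,x₂,…,xₙ,s) ≤ F(x₁,…,xₙ,t+s)` -/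
  tri : ∀ (x : Fin n → X) (a : X) (t s : ℝ), 0 < t → 0 < s →
    star (F (fun i => if i.val = 0 then x ⟨0, by omega⟩ else a) t)
         (F (Function.update x ⟨0, by omega⟩ a) s) ≤ F x (t + s)
  /-- (M6) continuity in `t` on `(0,∞)` -/
  cont : ∀ x : Fin n → X, ContinuousOn (F x) (Set.Ioi 0)

section Aux
variable {X : Type*} {n : ℕ} {hn : 3 ≤ n} {star : ℝ → ℝ → ℝ} {F : (Fin n → X) → ℝ → ℝ}

lemma gfnm_const_one (hF : IsGenFuzzyNMetric n hn star F) (c : X) (t : ℝ) (ht : 0 < t) :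
    F (fun _ => c) t = 1 := (hF.eq_one_iff _ t ht).mpr (fun _ _ => rfl)

lemma gfnm_mono_t (hstar : IsContTNorm star) (hF : IsGenFuzzyNMetric n hn star F)
    (v : Fin n → X) (t s : ℝ) (ht : 0 < t) (hs : 0 < s) : F v s ≤ F v (t + s) := by
  have htri := hF.tri v (v ⟨0, by omega⟩) t s ht hs
  have e1 : ∀ h0 : 0 < n, (fun i : Fin n => if i.val = 0 then v ⟨0, h0⟩ else v ⟨0, h0⟩)
      = fun _ => v ⟨0, h0⟩ := by
    intro h0; funext i; split <;> rfl
  have e2 : ∀ h0 : 0 < n, Function.update v ⟨0, h0⟩ (v ⟨0, h0⟩) = v := by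
    intro h0; exact Function.update_eq_self _ _
  rw [e1, e2, gfnm_const_one hF _ t ht] at htri
  calc F v s = star (F v s) 1 := (hstar.one _ (hF.mem v s hs)).symm
    _ = star 1 (F v s) := hstar.comm _ _
    _ ≤ F v (t + s) := htri

lemma gfnm_tri' (hstar : IsContTNorm star) (hF : IsGenFuzzyNMetric n hn star F)
    (x y z : X) (hxz : x ≠ z) (t s : ℝ) (ht : 0 < t) (hs : 0 < s) :
    star (F (fun i => if i.val = 0 then y else z) t)
      (F (fun i => if i.val = 0 then x else z) s)
      ≤ F (fun i => if i.val = 0 then x else y) (t + s) := by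
  set u : Fin n → X := fun i => if i.val = 0 then y else if i.val = 1 then x else z with hu
  have hu0 : ∀ h0 : 0 < n, u ⟨0, h0⟩ = y := by intro h0; simp [hu]
  have hu1 : ∀ h1 : 1 < n, u ⟨1, h1⟩ = x := by intro h1; simp [hu]
  have htri := hF.tri u z t s ht hs
  simp only [hu0] at htri
  have e2 : ∀ h0 : 0 < n, Function.update u ⟨0, h0⟩ z
      = (fun i : Fin n => if i.val = 0 then x else z) ∘
          (Equiv.swap ⟨0, h0⟩ ⟨1, by omega⟩) := by
    intro h0
    funext i
    rcases i with ⟨iv, hiv⟩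
    by_cases h0' : iv = 0
    · subst h0'; simp [Function.update, hu, Equiv.swap_apply_def, Fin.ext_iff]
    · by_cases h1' : iv = 1
      · subst h1'; simp [Function.update, hu, Equiv.swap_apply_def, Fin.ext_iff]
      · simp [Function.update, hu, Equiv.swap_apply_def, Fin.ext_iff, h0', h1']
  rw [e2, hF.perm _ _ s hs] at htri
  have hge := hF.ge u (t + s) (by linarith)
    ⟨⟨1, by omega⟩, ⟨2, by omega⟩, by simp [Fin.ext_iff], by simp [Fin.ext_iff],
      by simpa [hu] using hxz⟩
  simp only [hu0, hu1] at hge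
  have e3 : (fun i : Fin n => if i.val = n - 1 then x else y)
      = (fun i : Fin n => if i.val = 0 then x else y) ∘
          (Equiv.swap ⟨0, by omega⟩ ⟨n - 1, by omega⟩) := by
    funext i
    rcases i with ⟨iv, hiv⟩
    have hne : n - 1 ≠ 0 := by omega
    by_cases h0' : iv = 0
    · subst h0'; simp [Equiv.swap_apply_def, Fin.ext_iff, hne, Ne.symm hne]
    · by_cases h1' : iv = n - 1
      · subst h1'; simp [Equiv.swap_apply_def, Fin.ext_iff, hne]
      · simp [Equiv.swap_apply_def, Fin.ext_iff, h0', h1', hne]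
  rw [e3, hF.perm _ _ _ (by linarith : (0:ℝ) < t + s)] at hge
  exact le_trans htri hge

end Aux

/-- the topology `τ_F` of a generalized fuzzy `n`-metric space,
generated by the open balls `B_F(x,r,t) = {y : Fₙ(x,y,…,y,t) > 1−r}`, is Hausdorff. -/
theorem stmt8 {X : Type*} (n : ℕ) (hn : 3 ≤ n) (star : ℝ → ℝ → ℝ)
    (F : (Fin n → X) → ℝ → ℝ)
    (hstar : IsContTNorm star) (hF : IsGenFuzzyNMetric n hn star F) :
    @T2Space X (TopologicalSpace.generateFrom
      {A : Set X | ∃ (x : X) (r t : ℝ), 0 < r ∧ r < 1 ∧ 0 < t ∧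
        A = {y : X | 1 - r < F (fun i => if i.val = 0 then x else y) t}}) := by
  set S : Set (Set X) := {A : Set X | ∃ (x : X) (r t : ℝ), 0 < r ∧ r < 1 ∧ 0 < t ∧
        A = {y : X | 1 - r < F (fun i => if i.val = 0 then x else y) t}} with hS
  letI τ : TopologicalSpace X := TopologicalSpace.generateFrom S
  refine ⟨fun x y hxy => ?_⟩
  -- the two "radii"
  have hmem1 := hF.mem (fun i => if i.val = 0 then x else y) 1 one_pos
  have hmem2 := hF.mem (fun i => if i.val = 0 then y else x) 1 one_pos
  have hlt1 : F (fun i => if i.val = 0 then x else y) 1 < 1 := by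
    rcases lt_or_eq_of_le hmem1.2 with h | h
    · exact h
    · exfalso
      have := (hF.eq_one_iff _ 1 one_pos).mp h ⟨0, by omega⟩ ⟨1, by omega⟩
      simp at this
      exact hxy this
  have hlt2 : F (fun i => if i.val = 0 then y else x) 1 < 1 := by
    rcases lt_or_eq_of_le hmem2.2 with h | h
    · exact h
    · exfalso
      have := (hF.eq_one_iff _ 1 one_pos).mp h ⟨0, by omega⟩ ⟨1, by omega⟩
      simp at this
      exact hxy this.symm
  set r0 : ℝ := max (F (fun i => if i.val = 0 then x else y) 1)
      (F (fun i => if i.val = 0 then y else x) 1) with hr0def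
  have hr0lt : r0 < 1 := max_lt hlt1 hlt2
  -- continuity of u ↦ star u u at 1
  have hg : Continuous fun u : ℝ => star u u :=
    hstar.cont.comp (continuous_id.prodMk continuous_id)
  have hg1 : star 1 1 = 1 := hstar.one 1 ⟨zero_le_one, le_refl 1⟩
  have hnhds : (fun u : ℝ => star u u) ⁻¹' Set.Ioi r0 ∈ nhds (1:ℝ) := by
    apply hg.continuousAt.preimage_mem_nhds
    rw [hg1]
    exact Ioi_mem_nhds hr0lt
  obtain ⟨ε, hε, hball⟩ := Metric.mem_nhds_iff.mp hnhds
  set r : ℝ := min ε (min ((1 - r0) / 2) (1 / 2)) with hrdef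
  have hrpos : 0 < r := lt_min hε (lt_min (by linarith) (by norm_num))
  have hrlt1 : r < 1 := lt_of_le_of_lt (le_trans (min_le_right _ _) (min_le_right _ _)) (by norm_num)
  have hrε : r ≤ ε := min_le_left _ _
  have hrr0 : r0 ≤ 1 - r := by
    have : r ≤ (1 - r0) / 2 := le_trans (min_le_right _ _) (min_le_left _ _)
    linarith
  have hstarlarge : ∀ a b : ℝ, a ∈ Set.Icc (0:ℝ) 1 → b ∈ Set.Icc (0:ℝ) 1 →
      1 - r < a → 1 - r < b → r0 < star a b := by
    intro a b ha hb ha' hb'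
    have hm : min a b ∈ Metric.ball (1:ℝ) ε := by
      rw [Metric.mem_ball, Real.dist_eq, abs_lt]
      constructor
      · have : 1 - r < min a b := lt_min ha' hb'
        have : 1 - ε ≤ 1 - r := by linarith
        nlinarith [lt_min ha' hb']
      · have : min a b ≤ 1 := le_trans (min_le_left _ _) ha.2
        linarith
    have := hball hm
    calc r0 < star (min a b) (min a b) := this
      _ ≤ star a b := hstar.mono _ _ _ _ (min_le_left _ _) (min_le_right _ _)
  refine ⟨{z : X | 1 - r < F (fun i => if i.val = 0 then x else z) (1/2)},
          {z : X | 1 - r < F (fun i => if i.val = 0 then y else z) (1/2)},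
          ?_, ?_, ?_, ?_, ?_⟩
  · exact TopologicalSpace.isOpen_generateFrom_of_mem
      ⟨x, r, 1/2, hrpos, hrlt1, by norm_num, rfl⟩
  · exact TopologicalSpace.isOpen_generateFrom_of_mem
      ⟨y, r, 1/2, hrpos, hrlt1, by norm_num, rfl⟩
  · show 1 - r < F (fun i => if i.val = 0 then x else x) (1/2)
    have : (fun i : Fin n => if i.val = 0 then x else x) = fun _ => x := by
      funext i; split <;> rfl
    rw [this, gfnm_const_one hF x (1/2) (by norm_num)]
    linarith
  · show 1 - r < F (fun i => if i.val = 0 then y else y) (1/2)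
    have : (fun i : Fin n => if i.val = 0 then y else y) = fun _ => y := by
      funext i; split <;> rfl
    rw [this, gfnm_const_one hF y (1/2) (by norm_num)]
    linarith
  · rw [Set.disjoint_left]
    rintro z (hzU : 1 - r < _) (hzV : 1 - r < _)
    by_cases hzx : x = z
    · -- z = x : contradiction with F(y,x,...,1)
      subst hzx
      have hmono := gfnm_mono_t hstar hF (fun i : Fin n => if i.val = 0 then y else x)
        (1/2) (1/2) (by norm_num) (by norm_num)
      rw [show (1:ℝ)/2 + 1/2 = 1 by norm_num] at hmono
      have : 1 - r < F (fun i => if i.val = 0 then y else x) 1 := lt_of_lt_of_le hzV hmono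
      have h2 : F (fun i => if i.val = 0 then y else x) 1 ≤ r0 := le_max_right _ _
      linarith
    · by_cases hzy : y = z
      · subst hzy
        have hmono := gfnm_mono_t hstar hF (fun i : Fin n => if i.val = 0 then x else y)
          (1/2) (1/2) (by norm_num) (by norm_num)
        rw [show (1:ℝ)/2 + 1/2 = 1 by norm_num] at hmono
        have : 1 - r < F (fun i => if i.val = 0 then x else y) 1 := lt_of_lt_of_le hzU hmono
        have h2 : F (fun i => if i.val = 0 then x else y) 1 ≤ r0 := le_max_left _ _
        linarith
      · have htri := gfnm_tri' hstar hF x y z hzx (1/2) (1/2) (by norm_num) (by norm_num)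
        rw [show (1:ℝ)/2 + 1/2 = 1 by norm_num] at htri
        have hbig := hstarlarge _ _ (hF.mem _ (1/2) (by norm_num))
          (hF.mem _ (1/2) (by norm_num)) hzV hzU
        have : r0 < F (fun i => if i.val = 0 then x else y) 1 := lt_of_lt_of_le hbig htri
        have h2 : F (fun i => if i.val = 0 then x else y) 1 ≤ r0 := le_max_left _ _
        linarith
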